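/- Let γ be a proper player-1 selector, let v = ⟨1⟩val^{γ̄}(Reach(T)), let I = {s ∈ S ∖ (T ∪ W₂) | Pre₁(v)(s) > v(s)}, and let γ' be a player-1 selector that agrees with γ at all states not in I and satisfies Pre_{1:γ'}(v)(s) = Pre₁(v)(s) > v(s) for all s ∈ I. Then γ' is also proper. -/

import Mathlib

open scoped Classical

/-- A (two-player) concurrent game structure: a finite state space `S`, a finite
set `M` of moves, move assignments `Γ₁ Γ₂ : S → Finset M`, and a probabilistic
transition function `δ`. -/
structure CGame (S : Type) (M : Type) where
  Γ₁ : S → Finset M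
  Γ₂ : S → Finset M
  δ : S → M → M → S → ℝ

namespace CGame

variable {S M : Type} [Fintype S] [DecidableEq S] [Fintype M] [DecidableEq M]

/-- Well-formedness of a concurrent game structure: move sets are nonempty and
`δ s a b` is a probability distribution over states. -/
def IsGame (G : CGame S M) : Prop :=
  (∀ s, (G.Γ₁ s).Nonempty) ∧ (∀ s, (G.Γ₂ s).Nonempty) ∧
    (∀ s a b t, 0 ≤ G.δ s a b t) ∧ (∀ s a b, (∑ t, G.δ s a b t) = 1)

/-- `x : M → ℝ` is a probability distribution supported on `A`. -/
def IsDistOn (A : Finset M) (x : M → ℝ) : Prop :=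
  (∀ a, 0 ≤ x a) ∧ (∀ a, x a ≠ 0 → a ∈ A) ∧ (∑ a, x a) = 1

/-- A selector for player 1. -/
def IsSel1 (G : CGame S M) (ξ : S → M → ℝ) : Prop := ∀ s, IsDistOn (G.Γ₁ s) (ξ s)

/-- A selector for player 2. -/
def IsSel2 (G : CGame S M) (ξ : S → M → ℝ) : Prop := ∀ s, IsDistOn (G.Γ₂ s) (ξ s)

/-- A strategy for player 1: maps a history (past states `w` and current state `s`)
to a distribution over the moves available at `s`. -/
def IsStrat1 (G : CGame S M) (σ : List S → S → M → ℝ) : Prop :=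
  ∀ w s, IsDistOn (G.Γ₁ s) (σ w s)

/-- A strategy for player 2. -/
def IsStrat2 (G : CGame S M) (σ : List S → S → M → ℝ) : Prop :=
  ∀ w s, IsDistOn (G.Γ₂ s) (σ w s)

/-- The memoryless strategy induced by a selector. -/
def ml (ξ : S → M → ℝ) : List S → S → M → ℝ := fun _ s => ξ s

/-- The pure (Dirac) distribution on a move `b`. -/
def pureDist (b : M) : M → ℝ := fun b' => if b' = b then 1 else 0

/-- The player-1 selector choosing all available moves uniformly at random. -/
noncomputable def uniformSel (G : CGame S M) : S → M → ℝ :=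
  fun s a => if a ∈ G.Γ₁ s then (1 : ℝ) / (G.Γ₁ s).card else 0

/-- Probability of reaching `T` within `n` steps, starting from history `w`
and current state `s`, under strategies `σ₁, σ₂`. -/
noncomputable def reachW (G : CGame S M) (σ₁ σ₂ : List S → S → M → ℝ) (T : Set S) :
    ℕ → List S → S → ℝ
  | 0, _, s => if s ∈ T then 1 else 0
  | n + 1, w, s =>
      if s ∈ T then 1
      else ∑ a : M, ∑ b : M, ∑ t : S,
        σ₁ w s a * σ₂ w s b * G.δ s a b t * reachW G σ₁ σ₂ T n (w ++ [s]) t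

/-- Probability of staying in `F` for `n` steps, starting from history `w`
and current state `s`, under strategies `σ₁, σ₂`. -/
noncomputable def safeW (G : CGame S M) (σ₁ σ₂ : List S → S → M → ℝ) (F : Set S) :
    ℕ → List S → S → ℝ
  | 0, _, s => if s ∈ F then 1 else 0
  | n + 1, w, s =>
      if s ∈ F then
        ∑ a : M, ∑ b : M, ∑ t : S,
          σ₁ w s a * σ₂ w s b * G.δ s a b t * safeW G σ₁ σ₂ F n (w ++ [s]) t
      else 0

/-- `Pr_s^{σ₁,σ₂}(Reach T)`: probability of eventually reaching `T` from `s`. -/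
noncomputable def prReach (G : CGame S M) (σ₁ σ₂ : List S → S → M → ℝ) (T : Set S)
    (s : S) : ℝ :=
  ⨆ n : ℕ, reachW G σ₁ σ₂ T n [] s

/-- `Pr_s^{σ₁,σ₂}(Safe F)`: probability that the play stays in `F` forever. -/
noncomputable def prSafe (G : CGame S M) (σ₁ σ₂ : List S → S → M → ℝ) (F : Set S)
    (s : S) : ℝ :=
  ⨅ n : ℕ, safeW G σ₁ σ₂ F n [] s

/-- `⟨1⟩val^{σ₁}(Reach T)(s) = inf_{σ₂} Pr_s^{σ₁,σ₂}(Reach T)`. -/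
noncomputable def valReachUnder (G : CGame S M) (σ₁ : List S → S → M → ℝ) (T : Set S)
    (s : S) : ℝ :=
  ⨅ σ₂ : {σ // IsStrat2 G σ}, prReach G σ₁ σ₂.1 T s

/-- `⟨1⟩val(Reach T)(s) = sup_{σ₁} inf_{σ₂} Pr_s^{σ₁,σ₂}(Reach T)`. -/
noncomputable def valReach (G : CGame S M) (T : Set S) (s : S) : ℝ :=
  ⨆ σ₁ : {σ // IsStrat1 G σ}, valReachUnder G σ₁.1 T s

/-- `⟨1⟩val^{σ₁}(Safe F)(s) = inf_{σ₂} Pr_s^{σ₁,σ₂}(Safe F)`. -/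
noncomputable def valSafeUnder (G : CGame S M) (σ₁ : List S → S → M → ℝ) (F : Set S)
    (s : S) : ℝ :=
  ⨅ σ₂ : {σ // IsStrat2 G σ}, prSafe G σ₁ σ₂.1 F s

/-- `⟨1⟩val(Safe F)(s) = sup_{σ₁} inf_{σ₂} Pr_s^{σ₁,σ₂}(Safe F)`. -/
noncomputable def valSafe (G : CGame S M) (F : Set S) (s : S) : ℝ :=
  ⨆ σ₁ : {σ // IsStrat1 G σ}, valSafeUnder G σ₁.1 F s

/-- `W₂ = {s | ⟨1⟩val(Reach T)(s) = 0}`. -/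
noncomputable def W2 (G : CGame S M) (T : Set S) : Set S := {s | valReach G T s = 0}

/-- `W₁ = {s | ⟨1⟩val(Safe F)(s) = 1}`. -/
noncomputable def W1 (G : CGame S M) (F : Set S) : Set S := {s | valSafe G F s = 1}

/-- A state is absorbing if for all moves the successor is the state itself. -/
def Absorbing (G : CGame S M) (s : S) : Prop := ∀ a b, G.δ s a b s = 1

/-- A player-1 strategy is proper if against every player-2 strategy, from every
state the set `T ∪ W₂` is reached with probability 1. -/
noncomputable def Proper (G : CGame S M) (T : Set S) (σ₁ : List S → S → M → ℝ) : Prop :=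
  ∀ σ₂, IsStrat2 G σ₂ → ∀ s, prReach G σ₁ σ₂ (T ∪ W2 G T) s = 1

/-- `Pre_{ξ₁,ξ₂}(v)(s)`: one-step expectation of `v` at `s` when the players use the
one-state selectors `x, y`. -/
noncomputable def preSS (G : CGame S M) (v : S → ℝ) (s : S) (x y : M → ℝ) : ℝ :=
  ∑ a : M, ∑ b : M, ∑ t : S, v t * G.δ s a b t * x a * y b

/-- `Pre_{1:ξ₁}(v)(s) = inf_{ξ₂} Pre_{ξ₁,ξ₂}(v)(s)`. -/
noncomputable def pre1Sel (G : CGame S M) (v : S → ℝ) (s : S) (x : M → ℝ) : ℝ :=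
  ⨅ y : {y : M → ℝ // IsDistOn (G.Γ₂ s) y}, preSS G v s x y.1

/-- `Pre₁(v)(s) = sup_{ξ₁} inf_{ξ₂} Pre_{ξ₁,ξ₂}(v)(s)`. -/
noncomputable def pre1 (G : CGame S M) (v : S → ℝ) (s : S) : ℝ :=
  ⨆ x : {x : M → ℝ // IsDistOn (G.Γ₁ s) x}, pre1Sel G v s x.1

/-- The value-iteration sequence: `u 0 = [T]`, `u (k+1) = Pre₁ (u k)`. -/
noncomputable def valIter (G : CGame S M) (T : Set S) : ℕ → S → ℝ
  | 0 => fun s => if s ∈ T then 1 else 0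
  | n + 1 => fun s => pre1 G (valIter G T n) s

/-- The entry time `ℓ_k(s) = min {j ≤ k | u_j(s) = u_k(s)}`. -/
noncomputable def entryTime (G : CGame S M) (T : Set S) (k : ℕ) (s : S) : ℕ :=
  sInf {j : ℕ | valIter G T j s = valIter G T k s}

/-- `dest(s,b)` under a player-1 selector `η`: possible successors of `s` when
player 1 plays `η` and player 2 plays `b`. -/
def destSet (G : CGame S M) (η : S → M → ℝ) (s : S) (b : M) : Set S :=
  {t | ∃ a, η s a ≠ 0 ∧ G.δ s a b t ≠ 0}

/-- `OptSel(v,s)`: the set of optimal one-state player-1 selectors for `v` at `s`. -/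
noncomputable def OptSel (G : CGame S M) (v : S → ℝ) (s : S) : Set (M → ℝ) :=
  {x | IsDistOn (G.Γ₁ s) x ∧ pre1Sel G v s x = pre1 G v s}

/-- `CountOpt(v,s,x)`: the set of counter-optimal player-2 moves against `x`. -/
noncomputable def countOpt (G : CGame S M) (v : S → ℝ) (s : S) (x : M → ℝ) : Finset M :=
  (G.Γ₂ s).filter fun b => preSS G v s x (pureDist b) = pre1 G v s

/-- The support of a one-state selector, as a `Finset`. -/
noncomputable def fsupp (x : M → ℝ) : Finset M := Finset.univ.filter fun a => x a ≠ 0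

/-- `OptSelCount(v,s)`: pairs `(A,B)` such that some optimal selector has support `A`
and counter-optimal action set `B`. -/
noncomputable def optSelCount (G : CGame S M) (v : S → ℝ) (s : S) :
    Set (Finset M × Finset M) :=
  {p | ∃ x ∈ OptSel G v s, fsupp x = p.1 ∧ countOpt G v s x = p.2}

/-- A selector is `k`-uniform if every probability it assigns is of the form `i/j`
with `0 ≤ i ≤ j ≤ k`. -/
def KUniform (k : ℕ) (ξ : S → M → ℝ) : Prop :=
  ∀ s a, ∃ i j : ℕ, i ≤ j ∧ j ≤ k ∧ ξ s a = (i : ℝ) / (j : ℝ)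

end CGame
set_option linter.unusedSectionVars false

namespace CGame

variable {S M : Type} [Fintype S] [DecidableEq S] [Fintype M] [DecidableEq M]

/-- Player-2 uniform selector. -/
noncomputable def unif2 (G : CGame S M) : S → M → ℝ :=
  fun s b => if b ∈ G.Γ₂ s then (1 : ℝ) / (G.Γ₂ s).card else 0

lemma isDistOn_unif2 (G : CGame S M) (hG : G.IsGame) (s : S) :
    IsDistOn (G.Γ₂ s) (unif2 G s) := by
  obtain ⟨-, h2, -, -⟩ := hG
  have hc : ((G.Γ₂ s).card : ℝ) ≠ 0 := by
    exact_mod_cast Finset.card_ne_zero_of_mem (h2 s).choose_spec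
  refine ⟨fun a => ?_, fun a ha => ?_, ?_⟩
  · unfold unif2; split <;> positivity
  · by_contra hmem; simp [unif2, hmem] at ha
  · unfold unif2
    rw [Finset.sum_ite_mem]
    rw [Finset.univ_inter, Finset.sum_const, nsmul_eq_mul]
    field_simp

lemma isStrat2_ml_unif2 (G : CGame S M) (hG : G.IsGame) :
    IsStrat2 G (ml (unif2 G)) := fun _ s => isDistOn_unif2 G hG s

lemma isDistOn_pureDist (G : CGame S M) {s : S} {b : M} (hb : b ∈ G.Γ₂ s) :
    IsDistOn (G.Γ₂ s) (pureDist b) := by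
  refine ⟨fun a => ?_, fun a ha => ?_, ?_⟩
  · unfold pureDist; split <;> norm_num
  · unfold pureDist at ha; split at ha
    · subst ‹a = b›; exact hb
    · simp at ha
  · simp [pureDist]

/-- One-step expectation operator for a fixed history and state. -/
noncomputable def coef (G : CGame S M) (σ₁ σ₂ : List S → S → M → ℝ)
    (w : List S) (s : S) (f : S → ℝ) : ℝ :=
  ∑ a : M, ∑ b : M, ∑ t : S, σ₁ w s a * σ₂ w s b * G.δ s a b t * f t

section Coef

variable {G : CGame S M} {σ₁ σ₂ : List S → S → M → ℝ} {w : List S} {s : S}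

lemma coef_eq (f : S → ℝ) :
    coef G σ₁ σ₂ w s f
      = ∑ a, σ₁ w s a * ∑ b, σ₂ w s b * ∑ t, G.δ s a b t * f t := by
  unfold coef
  refine Finset.sum_congr rfl fun a _ => ?_
  rw [Finset.mul_sum]
  refine Finset.sum_congr rfl fun b _ => ?_
  rw [Finset.mul_sum, Finset.mul_sum]
  exact Finset.sum_congr rfl fun t _ => by ring

lemma coef_const (hG : G.IsGame) (h1 : IsDistOn (G.Γ₁ s) (σ₁ w s))
    (h2 : IsDistOn (G.Γ₂ s) (σ₂ w s)) (c : ℝ) :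
    coef G σ₁ σ₂ w s (fun _ => c) = c := by
  rw [coef_eq]
  have hδ : ∀ a b, (∑ t, G.δ s a b t * c) = c := by
    intro a b; rw [← Finset.sum_mul, hG.2.2.2 s a b, one_mul]
  have hb : ∀ a, (∑ b, σ₂ w s b * ∑ t, G.δ s a b t * c) = c := by
    intro a
    rw [Finset.sum_congr rfl fun b _ => by rw [hδ a b], ← Finset.sum_mul, h2.2.2, one_mul]
  rw [Finset.sum_congr rfl fun a _ => by rw [hb a], ← Finset.sum_mul, h1.2.2, one_mul]

lemma coef_nonneg (hG : G.IsGame) (h1 : ∀ a, 0 ≤ σ₁ w s a) (h2 : ∀ b, 0 ≤ σ₂ w s b)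
    {f : S → ℝ} (hf : ∀ t, 0 ≤ f t) : 0 ≤ coef G σ₁ σ₂ w s f := by
  unfold coef
  refine Finset.sum_nonneg fun a _ => Finset.sum_nonneg fun b _ =>
    Finset.sum_nonneg fun t _ => ?_
  exact mul_nonneg (mul_nonneg (mul_nonneg (h1 a) (h2 b)) (hG.2.2.1 s a b t)) (hf t)

lemma coef_mono (hG : G.IsGame) (h1 : ∀ a, 0 ≤ σ₁ w s a) (h2 : ∀ b, 0 ≤ σ₂ w s b)
    {f g : S → ℝ} (hfg : ∀ t, f t ≤ g t) :
    coef G σ₁ σ₂ w s f ≤ coef G σ₁ σ₂ w s g := by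
  unfold coef
  refine Finset.sum_le_sum fun a _ => Finset.sum_le_sum fun b _ =>
    Finset.sum_le_sum fun t _ => ?_
  have h0 : 0 ≤ σ₁ w s a * σ₂ w s b * G.δ s a b t :=
    mul_nonneg (mul_nonneg (h1 a) (h2 b)) (hG.2.2.1 s a b t)
  calc σ₁ w s a * σ₂ w s b * G.δ s a b t * f t
      ≤ σ₁ w s a * σ₂ w s b * G.δ s a b t * g t :=
        mul_le_mul_of_nonneg_left (hfg t) h0
    _ = _ := rfl

lemma coef_add (f g : S → ℝ) :
    coef G σ₁ σ₂ w s (fun t => f t + g t)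
      = coef G σ₁ σ₂ w s f + coef G σ₁ σ₂ w s g := by
  unfold coef
  rw [← Finset.sum_add_distrib]
  refine Finset.sum_congr rfl fun a _ => ?_
  rw [← Finset.sum_add_distrib]
  refine Finset.sum_congr rfl fun b _ => ?_
  rw [← Finset.sum_add_distrib]
  exact Finset.sum_congr rfl fun t _ => by ring

lemma coef_sub (f g : S → ℝ) :
    coef G σ₁ σ₂ w s (fun t => f t - g t)
      = coef G σ₁ σ₂ w s f - coef G σ₁ σ₂ w s g := by
  unfold coef
  rw [← Finset.sum_sub_distrib]
  refine Finset.sum_congr rfl fun a _ => ?_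
  rw [← Finset.sum_sub_distrib]
  refine Finset.sum_congr rfl fun b _ => ?_
  rw [← Finset.sum_sub_distrib]
  exact Finset.sum_congr rfl fun t _ => by ring

lemma coef_smul (c : ℝ) (f : S → ℝ) :
    coef G σ₁ σ₂ w s (fun t => c * f t) = c * coef G σ₁ σ₂ w s f := by
  unfold coef
  rw [Finset.mul_sum]
  refine Finset.sum_congr rfl fun a _ => ?_
  rw [Finset.mul_sum]
  refine Finset.sum_congr rfl fun b _ => ?_
  rw [Finset.mul_sum]
  exact Finset.sum_congr rfl fun t _ => by ring

lemma coef_congr : coef G σ₁ σ₂ w s = coef G (fun _ s' => σ₁ w s') σ₂ w s := rfl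

/-- `coef` only depends on `σ₁ w s` and `σ₂ w s`. -/
lemma coef_eq_of_eq {σ₁' : List S → S → M → ℝ} (h : σ₁' w s = σ₁ w s) (f : S → ℝ) :
    coef G σ₁' σ₂ w s f = coef G σ₁ σ₂ w s f := by
  unfold coef; rw [h]

lemma coef_eq_preSS (v : S → ℝ) :
    coef G σ₁ σ₂ w s v = preSS G v s (σ₁ w s) (σ₂ w s) := by
  unfold coef preSS
  refine Finset.sum_congr rfl fun a _ => Finset.sum_congr rfl fun b _ =>
    Finset.sum_congr rfl fun t _ => by ring

end Coef

end CGame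
namespace CGame

variable {S M : Type} [Fintype S] [DecidableEq S] [Fintype M] [DecidableEq M]

/-- Generic `n`-step recursion operator with guard set `F` and terminal payoff `f`. -/
noncomputable def recF (G : CGame S M) (σ₁ σ₂ : List S → S → M → ℝ) (F : Set S) :
    ℕ → (List S → S → ℝ) → List S → S → ℝ
  | 0, f, w, s => f w s
  | n + 1, f, w, s =>
      if s ∈ F then coef G σ₁ σ₂ w s (fun t => recF G σ₁ σ₂ F n f (w ++ [s]) t) else 0

section RecF

variable {G : CGame S M} {σ₁ σ₂ : List S → S → M → ℝ} {F : Set S}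

lemma safeW_succ (n : ℕ) (w : List S) (s : S) :
    safeW G σ₁ σ₂ F (n + 1) w s
      = if s ∈ F then coef G σ₁ σ₂ w s (fun t => safeW G σ₁ σ₂ F n (w ++ [s]) t)
        else 0 := rfl

lemma reachW_succ (T : Set S) (n : ℕ) (w : List S) (s : S) :
    reachW G σ₁ σ₂ T (n + 1) w s
      = if s ∈ T then 1
        else coef G σ₁ σ₂ w s (fun t => reachW G σ₁ σ₂ T n (w ++ [s]) t) := rfl

lemma safeW_zero (w : List S) (s : S) :
    safeW G σ₁ σ₂ F 0 w s = if s ∈ F then 1 else 0 := rfl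

lemma reachW_zero (T : Set S) (w : List S) (s : S) :
    reachW G σ₁ σ₂ T 0 w s = if s ∈ T then 1 else 0 := rfl

lemma recF_add (m n : ℕ) (f : List S → S → ℝ) :
    ∀ w s, recF G σ₁ σ₂ F (m + n) f w s
      = recF G σ₁ σ₂ F m (fun w' t => recF G σ₁ σ₂ F n f w' t) w s := by
  induction m with
  | zero => intro w s; rw [Nat.zero_add]; rfl
  | succ m ih =>
      intro w s
      rw [show m + 1 + n = (m + n) + 1 by omega]
      show (if s ∈ F then _ else (0:ℝ)) = (if s ∈ F then _ else 0)
      by_cases hs : s ∈ F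
      · simp only [if_pos hs]
        exact congrArg _ (funext fun t => ih (w ++ [s]) t)
      · simp only [if_neg hs]

lemma safeW_eq_recF (n : ℕ) (w : List S) (s : S) :
    safeW G σ₁ σ₂ F n w s
      = recF G σ₁ σ₂ F n (fun _ t => if t ∈ F then (1:ℝ) else 0) w s := by
  induction n generalizing w s with
  | zero => rfl
  | succ n ih =>
      rw [safeW_succ]
      show _ = (if s ∈ F then _ else (0:ℝ))
      by_cases hs : s ∈ F
      · simp only [if_pos hs]
        exact congrArg _ (funext fun t => ih (w ++ [s]) t)
      · simp only [if_neg hs]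

lemma safeW_add (m n : ℕ) (w : List S) (s : S) :
    safeW G σ₁ σ₂ F (m + n) w s
      = recF G σ₁ σ₂ F m (fun w' t => safeW G σ₁ σ₂ F n w' t) w s := by
  induction m generalizing w s with
  | zero => rw [Nat.zero_add]; rfl
  | succ m ih =>
      rw [show m + 1 + n = (m + n) + 1 by omega, safeW_succ]
      show _ = (if s ∈ F then _ else (0:ℝ))
      by_cases hs : s ∈ F
      · simp only [if_pos hs]
        exact congrArg _ (funext fun t => ih (w ++ [s]) t)
      · simp only [if_neg hs]

variable (hG : G.IsGame) (h1 : IsStrat1 G σ₁) (h2 : IsStrat2 G σ₂)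

include hG h1 h2

lemma recF_mono {f g : List S → S → ℝ} (hfg : ∀ w s, f w s ≤ g w s) :
    ∀ n w s, recF G σ₁ σ₂ F n f w s ≤ recF G σ₁ σ₂ F n g w s := by
  intro n
  induction n with
  | zero => exact hfg
  | succ n ih =>
      intro w s
      show (if s ∈ F then _ else (0:ℝ)) ≤ (if s ∈ F then _ else 0)
      by_cases hs : s ∈ F
      · simp only [if_pos hs]
        exact coef_mono hG (h1 w s).1 (h2 w s).1 fun t => ih (w ++ [s]) t
      · simp [hs]

lemma recF_nonneg {f : List S → S → ℝ} (hf : ∀ w s, 0 ≤ f w s) :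
    ∀ n w s, 0 ≤ recF G σ₁ σ₂ F n f w s := by
  intro n
  induction n with
  | zero => exact hf
  | succ n ih =>
      intro w s
      show (0:ℝ) ≤ if s ∈ F then _ else 0
      by_cases hs : s ∈ F
      · simp only [if_pos hs]
        exact coef_nonneg hG (h1 w s).1 (h2 w s).1 fun t => ih (w ++ [s]) t
      · simp [hs]

lemma recF_le_const {f : List S → S → ℝ} {c : ℝ} (hc : 0 ≤ c) (hf : ∀ w s, f w s ≤ c) :
    ∀ n w s, recF G σ₁ σ₂ F n f w s ≤ c := by
  intro n
  induction n with
  | zero => exact hf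
  | succ n ih =>
      intro w s
      show (if s ∈ F then _ else (0:ℝ)) ≤ c
      by_cases hs : s ∈ F
      · simp only [if_pos hs]
        calc coef G σ₁ σ₂ w s (fun t => recF G σ₁ σ₂ F n f (w ++ [s]) t)
            ≤ coef G σ₁ σ₂ w s (fun _ => c) :=
              coef_mono hG (h1 w s).1 (h2 w s).1 fun t => ih (w ++ [s]) t
          _ = c := coef_const hG (h1 w s) (h2 w s) c
      · simp [hs, hc]

omit hG h1 h2

lemma recF_smul (c : ℝ) (f : List S → S → ℝ) :
    ∀ n w s, recF G σ₁ σ₂ F n (fun w' t => c * f w' t) w s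
      = c * recF G σ₁ σ₂ F n f w s := by
  intro n
  induction n with
  | zero => intro w s; rfl
  | succ n ih =>
      intro w s
      show (if s ∈ F then _ else (0:ℝ)) = c * if s ∈ F then _ else 0
      by_cases hs : s ∈ F
      · simp only [if_pos hs]
        rw [show (fun t => recF G σ₁ σ₂ F n (fun w' t => c * f w' t) (w ++ [s]) t)
              = (fun t => c * recF G σ₁ σ₂ F n f (w ++ [s]) t) from
            funext fun t => ih (w ++ [s]) t]
        exact coef_smul c _
      · simp [hs]

lemma recF_addfun (f g : List S → S → ℝ) :
    ∀ n w s, recF G σ₁ σ₂ F n (fun w' t => f w' t + g w' t) w s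
      = recF G σ₁ σ₂ F n f w s + recF G σ₁ σ₂ F n g w s := by
  intro n
  induction n with
  | zero => intro w s; rfl
  | succ n ih =>
      intro w s
      show (if s ∈ F then _ else (0:ℝ)) = (if s ∈ F then _ else 0) + (if s ∈ F then _ else 0)
      by_cases hs : s ∈ F
      · simp only [if_pos hs]
        rw [show (fun t => recF G σ₁ σ₂ F n (fun w' t => f w' t + g w' t) (w ++ [s]) t)
              = (fun t => recF G σ₁ σ₂ F n f (w ++ [s]) t
                  + recF G σ₁ σ₂ F n g (w ++ [s]) t) from
            funext fun t => ih (w ++ [s]) t]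
        exact coef_add _ _
      · simp [hs]

lemma coef_zero {w : List S} {s : S} : coef G σ₁ σ₂ w s (fun _ => (0:ℝ)) = 0 := by
  unfold coef; simp

lemma recF_zero_fun : ∀ n (w : List S) (s : S),
    recF G σ₁ σ₂ F n (fun _ _ => (0:ℝ)) w s = 0 := by
  intro n
  induction n with
  | zero => intro w s; rfl
  | succ n ih =>
      intro w s
      show (if s ∈ F then _ else (0:ℝ)) = 0
      by_cases hs : s ∈ F
      · simp only [if_pos hs]
        rw [show (fun t => recF G σ₁ σ₂ F n (fun _ _ => (0:ℝ)) (w ++ [s]) t)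
              = (fun _ => (0:ℝ)) from funext fun t => ih (w ++ [s]) t]
        exact coef_zero
      · simp [hs]

lemma recF_sum {ι : Type*} (r : Finset ι) (f : ι → List S → S → ℝ) :
    ∀ n (w : List S) (s : S), recF G σ₁ σ₂ F n (fun w' t => ∑ i ∈ r, f i w' t) w s
      = ∑ i ∈ r, recF G σ₁ σ₂ F n (f i) w s := by
  classical
  induction r using Finset.cons_induction with
  | empty => intro n w s; simp [recF_zero_fun]
  | cons a r ha ih =>
      intro n w s
      simp only [Finset.sum_cons]
      rw [show (fun w' t => f a w' t + ∑ i ∈ r, f i w' t)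
            = (fun w' t => f a w' t + (fun w'' t' => ∑ i ∈ r, f i w'' t') w' t) from rfl,
        recF_addfun, ih]

include hG h1 h2

lemma safeW_nonneg : ∀ n (w : List S) (s : S), 0 ≤ safeW G σ₁ σ₂ F n w s := by
  intro n
  induction n with
  | zero => intro w s; rw [safeW_zero]; split <;> norm_num
  | succ n ih =>
      intro w s
      rw [safeW_succ]
      split
      · exact coef_nonneg hG (h1 w s).1 (h2 w s).1 fun t => ih (w ++ [s]) t
      · exact le_refl 0

lemma safeW_le_one : ∀ n (w : List S) (s : S), safeW G σ₁ σ₂ F n w s ≤ 1 := by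
  intro n
  induction n with
  | zero => intro w s; rw [safeW_zero]; split <;> norm_num
  | succ n ih =>
      intro w s
      rw [safeW_succ]
      split
      · calc coef G σ₁ σ₂ w s (fun t => safeW G σ₁ σ₂ F n (w ++ [s]) t)
            ≤ coef G σ₁ σ₂ w s (fun _ => 1) :=
              coef_mono hG (h1 w s).1 (h2 w s).1 fun t => ih (w ++ [s]) t
          _ = 1 := coef_const hG (h1 w s) (h2 w s) 1
      · norm_num

lemma reachW_nonneg (T : Set S) : ∀ n (w : List S) (s : S),
    0 ≤ reachW G σ₁ σ₂ T n w s := by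
  intro n
  induction n with
  | zero => intro w s; rw [reachW_zero]; split <;> norm_num
  | succ n ih =>
      intro w s
      rw [reachW_succ]
      split
      · norm_num
      · exact coef_nonneg hG (h1 w s).1 (h2 w s).1 fun t => ih (w ++ [s]) t

lemma reachW_le_one (T : Set S) : ∀ n (w : List S) (s : S),
    reachW G σ₁ σ₂ T n w s ≤ 1 := by
  intro n
  induction n with
  | zero => intro w s; rw [reachW_zero]; split <;> norm_num
  | succ n ih =>
      intro w s
      rw [reachW_succ]
      split
      · norm_num
      · calc coef G σ₁ σ₂ w s (fun t => reachW G σ₁ σ₂ T n (w ++ [s]) t)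
            ≤ coef G σ₁ σ₂ w s (fun _ => 1) :=
              coef_mono hG (h1 w s).1 (h2 w s).1 fun t => ih (w ++ [s]) t
          _ = 1 := coef_const hG (h1 w s) (h2 w s) 1

lemma reachW_add_safeW (A : Set S) : ∀ n (w : List S) (s : S),
    reachW G σ₁ σ₂ A n w s + safeW G σ₁ σ₂ Aᶜ n w s = 1 := by
  intro n
  induction n with
  | zero =>
      intro w s
      rw [reachW_zero, safeW_zero]
      by_cases hs : s ∈ A <;> simp [hs]
  | succ n ih =>
      intro w s
      rw [reachW_succ, safeW_succ]
      by_cases hs : s ∈ A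
      · simp [hs]
      · rw [if_neg hs, if_pos (Set.mem_compl hs), ← coef_add,
          show (fun t => reachW G σ₁ σ₂ A n (w ++ [s]) t
              + safeW G σ₁ σ₂ Aᶜ n (w ++ [s]) t) = (fun _ => (1:ℝ)) from
            funext fun t => ih (w ++ [s]) t]
        exact coef_const hG (h1 w s) (h2 w s) 1

lemma bddAbove_reachW (T : Set S) (s : S) :
    BddAbove (Set.range fun n => reachW G σ₁ σ₂ T n [] s) := by
  refine ⟨1, ?_⟩
  rintro x ⟨n, rfl⟩
  exact reachW_le_one hG h1 h2 T n [] s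

lemma reachW_le_prReach (T : Set S) (n : ℕ) (s : S) :
    reachW G σ₁ σ₂ T n [] s ≤ prReach G σ₁ σ₂ T s :=
  le_ciSup (bddAbove_reachW hG h1 h2 T s) n

lemma prReach_le_one (T : Set S) (s : S) : prReach G σ₁ σ₂ T s ≤ 1 :=
  ciSup_le fun n => reachW_le_one hG h1 h2 T n [] s

lemma prReach_nonneg (T : Set S) (s : S) : 0 ≤ prReach G σ₁ σ₂ T s :=
  le_trans (reachW_nonneg hG h1 h2 T 0 [] s) (reachW_le_prReach hG h1 h2 T 0 s)

lemma prReach_eq_one_of (A : Set S) (s : S)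
    (h : ∀ η : ℝ, 0 < η → ∃ n, safeW G σ₁ σ₂ Aᶜ n [] s ≤ η) :
    prReach G σ₁ σ₂ A s = 1 := by
  refine le_antisymm (prReach_le_one hG h1 h2 A s) ?_
  by_contra hlt
  push_neg at hlt
  obtain ⟨n, hn⟩ := h ((1 - prReach G σ₁ σ₂ A s) / 2) (by linarith)
  have h1' := reachW_add_safeW hG h1 h2 A n [] s
  have h2' := reachW_le_prReach hG h1 h2 A n s
  linarith

lemma exists_safeW_small (A : Set S) (s : S) (h : prReach G σ₁ σ₂ A s = 1)
    {η : ℝ} (hη : 0 < η) : ∃ n, safeW G σ₁ σ₂ Aᶜ n [] s ≤ η := by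
  have hlt : 1 - η < prReach G σ₁ σ₂ A s := by rw [h]; linarith
  obtain ⟨n, hn⟩ := exists_lt_of_lt_ciSup hlt
  refine ⟨n, ?_⟩
  have := reachW_add_safeW hG h1 h2 A n [] s
  linarith

end RecF

end CGame
namespace CGame

variable {S M : Type} [Fintype S] [DecidableEq S] [Fintype M] [DecidableEq M]
variable {G : CGame S M}

lemma preSS_nonneg (hG : G.IsGame) {v : S → ℝ} (hv : ∀ t, 0 ≤ v t) {s : S}
    {x y : M → ℝ} (hx : ∀ a, 0 ≤ x a) (hy : ∀ b, 0 ≤ y b) :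
    0 ≤ preSS G v s x y := by
  unfold preSS
  refine Finset.sum_nonneg fun a _ => Finset.sum_nonneg fun b _ =>
    Finset.sum_nonneg fun t _ => ?_
  exact mul_nonneg (mul_nonneg (mul_nonneg (hv t) (hG.2.2.1 s a b t)) (hx a)) (hy b)

lemma nonempty_dist2 (hG : G.IsGame) (s : S) :
    Nonempty {y : M → ℝ // IsDistOn (G.Γ₂ s) y} :=
  ⟨⟨unif2 G s, isDistOn_unif2 G hG s⟩⟩

lemma pre1Sel_le (hG : G.IsGame) {v : S → ℝ} (hv : ∀ t, 0 ≤ v t) {s : S}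
    {x : M → ℝ} (hx : ∀ a, 0 ≤ x a) {y : M → ℝ} (hy : IsDistOn (G.Γ₂ s) y) :
    pre1Sel G v s x ≤ preSS G v s x y := by
  refine ciInf_le ⟨0, ?_⟩ (⟨y, hy⟩ : {y : M → ℝ // IsDistOn (G.Γ₂ s) y})
  rintro r ⟨z, rfl⟩
  exact preSS_nonneg hG hv hx z.2.1

lemma le_pre1Sel (hG : G.IsGame) {v : S → ℝ} {s : S} {x : M → ℝ} {c : ℝ}
    (h : ∀ y : M → ℝ, IsDistOn (G.Γ₂ s) y → c ≤ preSS G v s x y) :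
    c ≤ pre1Sel G v s x := by
  haveI := nonempty_dist2 hG s
  exact le_ciInf fun y => h y.1 y.2

lemma delta_absorbing (hG : G.IsGame) {s : S} (h : Absorbing G s) (a b : M) (t : S) :
    G.δ s a b t = if t = s then 1 else 0 := by
  by_cases ht : t = s
  · rw [if_pos ht, ht]; exact h a b
  · rw [if_neg ht]
    have hsum : G.δ s a b s + ∑ u ∈ Finset.univ.erase s, G.δ s a b u = 1 := by
      rw [Finset.add_sum_erase _ _ (Finset.mem_univ s)]
      exact hG.2.2.2 s a b
    have hz : ∑ u ∈ Finset.univ.erase s, G.δ s a b u = 0 := by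
      rw [h a b] at hsum; linarith
    have := (Finset.sum_eq_zero_iff_of_nonneg
      (fun u _ => hG.2.2.1 s a b u)).1 hz t (Finset.mem_erase.2 ⟨ht, Finset.mem_univ t⟩)
    exact this

lemma preSS_absorbing (hG : G.IsGame) {s : S} (h : Absorbing G s) (v : S → ℝ)
    {x y : M → ℝ} (hx : IsDistOn (G.Γ₁ s) x) (hy : IsDistOn (G.Γ₂ s) y) :
    preSS G v s x y = v s := by
  unfold preSS
  have hin : ∀ a b, (∑ t, v t * G.δ s a b t * x a * y b) = v s * x a * y b := by
    intro a b
    rw [Finset.sum_eq_single s]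
    · rw [delta_absorbing hG h a b s, if_pos rfl, mul_one]
    · intro t _ ht
      rw [delta_absorbing hG h a b t, if_neg ht]
      ring
    · intro hs; exact absurd (Finset.mem_univ s) hs
  calc (∑ a : M, ∑ b : M, ∑ t : S, v t * G.δ s a b t * x a * y b)
      = ∑ a : M, ∑ b : M, v s * x a * y b := by
        exact Finset.sum_congr rfl fun a _ => Finset.sum_congr rfl fun b _ => hin a b
    _ = ∑ a : M, v s * x a * ∑ b : M, y b := by
        exact Finset.sum_congr rfl fun a _ => by rw [Finset.mul_sum]
    _ = ∑ a : M, v s * x a := by rw [hy.2.2]; simp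
    _ = v s * ∑ a : M, x a := by rw [Finset.mul_sum]
    _ = v s := by rw [hx.2.2, mul_one]

lemma pre1Sel_absorbing (hG : G.IsGame) {s : S} (h : Absorbing G s) (v : S → ℝ)
    {x : M → ℝ} (hx : IsDistOn (G.Γ₁ s) x) :
    pre1Sel G v s x = v s := by
  haveI := nonempty_dist2 hG s
  unfold pre1Sel
  rw [show (fun y : {y : M → ℝ // IsDistOn (G.Γ₂ s) y} => preSS G v s x y.1)
        = (fun _ => v s) from funext fun y => preSS_absorbing hG h v hx y.2]
  exact ciInf_const

/-- Splice a first-round choice `y` at state `s` with continuation strategies `c t`. -/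
noncomputable def splice (G : CGame S M) (s : S) (y : M → ℝ)
    (c : S → List S → S → M → ℝ) : List S → S → M → ℝ :=
  fun w s' => match w with
    | [] => if s' = s then y else unif2 G s'
    | _ :: rest => c (rest.headD s') rest s'

lemma isStrat2_splice (hG : G.IsGame) (s : S) {y : M → ℝ} (hy : IsDistOn (G.Γ₂ s) y)
    {c : S → List S → S → M → ℝ} (hc : ∀ t, IsStrat2 G (c t)) :
    IsStrat2 G (splice G s y c) := by
  intro w s'
  match w with
  | [] =>
      show IsDistOn _ (if s' = s then y else unif2 G s')
      by_cases hs : s' = s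
      · rw [if_pos hs, hs]; exact hy
      · rw [if_neg hs]; exact isDistOn_unif2 G hG s'
  | _ :: rest => exact hc (rest.headD s') rest s'

lemma headD_append (w : List S) (t u : S) : (w ++ [t]).headD u = w.headD t := by
  cases w <;> simp

lemma reachW_splice {γ : S → M → ℝ} {T : Set S} {s : S} {y : M → ℝ}
    {c : S → List S → S → M → ℝ} :
    ∀ n (w : List S) (t : S),
      reachW G (ml γ) (splice G s y c) T n (s :: w) t
        = reachW G (ml γ) (c (w.headD t)) T n w t := by
  intro n
  induction n with
  | zero => intro w t; rfl
  | succ n ih =>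
      intro w t
      rw [reachW_succ, reachW_succ]
      by_cases ht : t ∈ T
      · simp [ht]
      · rw [if_neg ht, if_neg ht]
        unfold coef
        refine Finset.sum_congr rfl fun a _ => Finset.sum_congr rfl fun b _ =>
          Finset.sum_congr rfl fun u _ => ?_
        have h3 : reachW G (ml γ) (splice G s y c) T n ((s :: w) ++ [t]) u
            = reachW G (ml γ) (c (w.headD t)) T n (w ++ [t]) u := by
          have h' := ih (w ++ [t]) u
          rw [headD_append] at h'
          exact h'
        simp only [h3]
        rfl

/-- Key one-step inequality: the value of the memoryless strategy `ml γ` is a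
"pre-fixed point" of the one-step operator at every non-target state. -/
lemma val_le_preSS (hG : G.IsGame) {γ : S → M → ℝ} (hγ : IsSel1 G γ) (T : Set S)
    (hv0 : ∀ t, 0 ≤ valReachUnder G (ml γ) T t)
    {s : S} (hsT : s ∉ T) {y : M → ℝ} (hy : IsDistOn (G.Γ₂ s) y) :
    valReachUnder G (ml γ) T s
      ≤ preSS G (valReachUnder G (ml γ) T) s (γ s) y := by
  set v := valReachUnder G (ml γ) T with hv
  have hstrat1 : IsStrat1 G (ml γ) := fun w s' => hγ s'
  haveI : Nonempty {σ // IsStrat2 G σ} := ⟨⟨ml (unif2 G), isStrat2_ml_unif2 G hG⟩⟩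
  have key : ∀ η : ℝ, 0 < η → v s ≤ preSS G v s (γ s) y + η := by
    intro η hη
    have hex : ∀ t : S, ∃ σ₂ : List S → S → M → ℝ,
        IsStrat2 G σ₂ ∧ prReach G (ml γ) σ₂ T t < v t + η := by
      intro t
      have hlt : (⨅ σ₂ : {σ // IsStrat2 G σ}, prReach G (ml γ) σ₂.1 T t) < v t + η := by
        have : v t = ⨅ σ₂ : {σ // IsStrat2 G σ}, prReach G (ml γ) σ₂.1 T t := rfl
        linarith [this ▸ (lt_add_of_pos_right (v t) hη)]
      obtain ⟨σ₂, hσ₂⟩ := exists_lt_of_ciInf_lt hlt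
      exact ⟨σ₂.1, σ₂.2, hσ₂⟩
    choose c hc1 hc2 using hex
    set sig := splice G s y c with hsig
    have hstrat2 : IsStrat2 G sig := isStrat2_splice hG s hy hc1
    have hvle : v s ≤ prReach G (ml γ) sig T s := by
      have hb : BddBelow (Set.range fun σ₂ : {σ // IsStrat2 G σ} =>
          prReach G (ml γ) σ₂.1 T s) := ⟨0, by
        rintro r ⟨σ₂, rfl⟩
        exact prReach_nonneg hG hstrat1 σ₂.2 T s⟩
      exact ciInf_le hb (⟨sig, hstrat2⟩ : {σ // IsStrat2 G σ})
    refine le_trans hvle (ciSup_le fun n => ?_)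
    match n with
    | 0 =>
        rw [reachW_zero, if_neg hsT]
        have : 0 ≤ preSS G v s (γ s) y := preSS_nonneg hG hv0 (hγ s).1 hy.1
        linarith
    | n + 1 =>
        rw [reachW_succ, if_neg hsT]
        have hval : ∀ t, reachW G (ml γ) sig T n ([] ++ [s]) t ≤ v t + η := by
          intro t
          have h1 : reachW G (ml γ) sig T n [s] t
              = reachW G (ml γ) (c t) T n [] t := by
            have := reachW_splice (G := G) (γ := γ) (T := T) (s := s) (y := y)
              (c := c) n [] t
            simpa using this
          rw [show ([] : List S) ++ [s] = [s] from rfl, h1]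
          exact le_trans (reachW_le_prReach hG hstrat1 (hc1 t) T n t) (le_of_lt (hc2 t))
        have hy' : sig [] s = y := by
          show (if s = s then y else unif2 G s) = y
          rw [if_pos rfl]
        calc coef G (ml γ) sig [] s (fun t => reachW G (ml γ) sig T n ([] ++ [s]) t)
            ≤ coef G (ml γ) sig [] s (fun t => v t + η) :=
              coef_mono hG (hstrat1 [] s).1 (hstrat2 [] s).1 hval
          _ = coef G (ml γ) sig [] s v + coef G (ml γ) sig [] s (fun _ => η) :=
              coef_add _ _
          _ = preSS G v s (γ s) y + η := by
              rw [coef_eq_preSS, coef_const hG (hstrat1 [] s) (hstrat2 [] s) η]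
              show preSS G v s (γ s) (sig [] s) + η = _
              rw [hy']
    
  by_contra hcon
  push_neg at hcon
  have := key ((v s - preSS G v s (γ s) y) / 2) (by linarith)
  linarith

end CGame
namespace CGame

variable {S M : Type} [Fintype S] [DecidableEq S] [Fintype M] [DecidableEq M]

/-- Inner one-step expectation for a fixed player-2 move. -/
noncomputable def innerW (G : CGame S M) (γ : S → M → ℝ) (w : S → ℝ) (s : S) (b : M) : ℝ :=
  ∑ a, ∑ t, γ s a * G.δ s a b t * w t

/-- Player-2 best-response value iteration for safety against `ml γ`. -/
noncomputable def wIter (G : CGame S M) (γ : S → M → ℝ) (U : Set S) : ℕ → S → ℝ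
  | 0 => fun s => if s ∈ U then 0 else 1
  | n + 1 => fun s =>
      if s ∈ U then 0
      else if h : (G.Γ₂ s).Nonempty then
        (G.Γ₂ s).sup' h (innerW G γ (wIter G γ U n) s)
      else 0

noncomputable def wlim (G : CGame S M) (γ : S → M → ℝ) (U : Set S) : S → ℝ :=
  fun s => ⨅ n, wIter G γ U n s

section WIter

variable {G : CGame S M} {γ : S → M → ℝ} {U : Set S}

lemma wIter_zero (s : S) : wIter G γ U 0 s = if s ∈ U then 0 else 1 := rfl

lemma wIter_succ (n : ℕ) (s : S) :
    wIter G γ U (n + 1) s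
      = if s ∈ U then 0
        else if h : (G.Γ₂ s).Nonempty then
          (G.Γ₂ s).sup' h (innerW G γ (wIter G γ U n) s)
        else 0 := rfl

variable (hG : G.IsGame) (hγ : IsSel1 G γ)

include hG hγ

lemma innerW_mono {w w' : S → ℝ} (h : ∀ t, w t ≤ w' t) (s : S) (b : M) :
    innerW G γ w s b ≤ innerW G γ w' s b := by
  unfold innerW
  refine Finset.sum_le_sum fun a _ => Finset.sum_le_sum fun t _ => ?_
  exact mul_le_mul_of_nonneg_left (h t)
    (mul_nonneg ((hγ s).1 a) (hG.2.2.1 s a b t))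

lemma innerW_nonneg {w : S → ℝ} (h : ∀ t, 0 ≤ w t) (s : S) (b : M) :
    0 ≤ innerW G γ w s b := by
  unfold innerW
  refine Finset.sum_nonneg fun a _ => Finset.sum_nonneg fun t _ => ?_
  exact mul_nonneg (mul_nonneg ((hγ s).1 a) (hG.2.2.1 s a b t)) (h t)

lemma innerW_const (c : ℝ) (s : S) (b : M) : innerW G γ (fun _ => c) s b = c := by
  unfold innerW
  have : ∀ a, (∑ t, γ s a * G.δ s a b t * c) = γ s a * c := by
    intro a
    rw [show (∑ t, γ s a * G.δ s a b t * c) = γ s a * c * ∑ t, G.δ s a b t by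
      rw [Finset.mul_sum]; exact Finset.sum_congr rfl fun t _ => by ring]
    rw [hG.2.2.2 s a b, mul_one]
  rw [Finset.sum_congr rfl fun a _ => this a, ← Finset.sum_mul, (hγ s).2.2, one_mul]

lemma innerW_add_const (w : S → ℝ) (c : ℝ) (s : S) (b : M) :
    innerW G γ (fun t => w t + c) s b = innerW G γ w s b + c := by
  have h1 : innerW G γ (fun t => w t + c) s b
      = innerW G γ w s b + innerW G γ (fun _ => c) s b := by
    unfold innerW
    rw [← Finset.sum_add_distrib]
    refine Finset.sum_congr rfl fun a _ => ?_
    rw [← Finset.sum_add_distrib]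
    refine Finset.sum_congr rfl fun t _ => by ring
  rw [h1, innerW_const hG hγ]

lemma wIter_nonneg : ∀ n (s : S), 0 ≤ wIter G γ U n s := by
  intro n
  induction n with
  | zero => intro s; rw [wIter_zero]; split <;> norm_num
  | succ n ih =>
      intro s
      rw [wIter_succ]
      split
      · exact le_refl 0
      · split
        · rename_i h
          obtain ⟨b, hb⟩ := h
          exact le_trans (innerW_nonneg hG hγ ih s b) (Finset.le_sup' _ hb)
        · exact le_refl 0

lemma wIter_le_one : ∀ n (s : S), wIter G γ U n s ≤ 1 := by
  intro n
  induction n with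
  | zero => intro s; rw [wIter_zero]; split <;> norm_num
  | succ n ih =>
      intro s
      rw [wIter_succ]
      split
      · norm_num
      · split
        · refine Finset.sup'_le _ _ fun b _ => ?_
          calc innerW G γ (wIter G γ U n) s b ≤ innerW G γ (fun _ => 1) s b :=
                innerW_mono hG hγ ih s b
            _ = 1 := innerW_const hG hγ 1 s b
        · norm_num

lemma wIter_succ_le : ∀ n (s : S), wIter G γ U (n + 1) s ≤ wIter G γ U n s := by
  intro n
  induction n with
  | zero =>
      intro s
      rw [wIter_succ, wIter_zero]
      split
      · exact le_refl 0
      · split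
        · refine Finset.sup'_le _ _ fun b _ => ?_
          calc innerW G γ (wIter G γ U 0) s b ≤ innerW G γ (fun _ => 1) s b :=
                innerW_mono hG hγ (fun t => wIter_le_one hG hγ 0 t) s b
            _ = 1 := innerW_const hG hγ 1 s b
        · norm_num
  | succ n ih =>
      intro s
      rw [wIter_succ, wIter_succ]
      split
      · exact le_refl 0
      · split
        · exact Finset.sup'_mono_fun fun b _ => innerW_mono hG hγ (ih) s b
        · exact le_refl 0

lemma wIter_antitone {m n : ℕ} (h : m ≤ n) (s : S) :
    wIter G γ U n s ≤ wIter G γ U m s :=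
  (antitone_nat_of_succ_le (f := fun k => wIter G γ U k s)
    (fun k => wIter_succ_le hG hγ k s)) h

lemma wlim_le (n : ℕ) (s : S) : wlim G γ U s ≤ wIter G γ U n s :=
  ciInf_le ⟨0, by rintro r ⟨n, rfl⟩; exact wIter_nonneg hG hγ n s⟩ n

lemma wlim_nonneg (s : S) : 0 ≤ wlim G γ U s :=
  le_ciInf fun n => wIter_nonneg hG hγ n s

lemma safeW_le_wIter {σ₂ : List S → S → M → ℝ} (hσ₂ : IsStrat2 G σ₂) :
    ∀ n (w : List S) (s : S), safeW G (ml γ) σ₂ Uᶜ n w s ≤ wIter G γ U n s := by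
  have hstrat1 : IsStrat1 G (ml γ) := fun w s => hγ s
  intro n
  induction n with
  | zero =>
      intro w s
      rw [safeW_zero, wIter_zero]
      by_cases hs : s ∈ U <;> simp [hs]
  | succ n ih =>
      intro w s
      rw [safeW_succ, wIter_succ]
      by_cases hs : s ∈ U
      · rw [if_neg (by simpa using hs), if_pos hs]
      · rw [if_pos (Set.mem_compl hs), if_neg hs, dif_pos (hG.2.1 s)]
        have step1 : coef G (ml γ) σ₂ w s (fun t => safeW G (ml γ) σ₂ Uᶜ n (w ++ [s]) t)
            ≤ coef G (ml γ) σ₂ w s (fun t => wIter G γ U n t) :=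
          coef_mono hG (hstrat1 w s).1 (hσ₂ w s).1 fun t => ih (w ++ [s]) t
        have hrw : coef G (ml γ) σ₂ w s (fun t => wIter G γ U n t)
            = ∑ b, σ₂ w s b * innerW G γ (wIter G γ U n) s b := by
          unfold coef innerW ml
          rw [Finset.sum_comm]
          refine Finset.sum_congr rfl fun b _ => ?_
          rw [Finset.mul_sum]
          refine Finset.sum_congr rfl fun a _ => ?_
          rw [Finset.mul_sum]
          exact Finset.sum_congr rfl fun t _ => by ring
        have step2 : (∑ b, σ₂ w s b * innerW G γ (wIter G γ U n) s b)
            ≤ ∑ b, σ₂ w s b * (G.Γ₂ s).sup' (hG.2.1 s) (innerW G γ (wIter G γ U n) s) := by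
          refine Finset.sum_le_sum fun b _ => ?_
          by_cases hb : σ₂ w s b = 0
          · rw [hb, zero_mul, zero_mul]
          · exact mul_le_mul_of_nonneg_left
              (Finset.le_sup' _ ((hσ₂ w s).2.1 b hb)) ((hσ₂ w s).1 b)
        have step3 : (∑ b, σ₂ w s b * (G.Γ₂ s).sup' (hG.2.1 s) (innerW G γ (wIter G γ U n) s))
            = (G.Γ₂ s).sup' (hG.2.1 s) (innerW G γ (wIter G γ U n) s) := by
          rw [← Finset.sum_mul, (hσ₂ w s).2.2, one_mul]
        calc coef G (ml γ) σ₂ w s (fun t => safeW G (ml γ) σ₂ Uᶜ n (w ++ [s]) t)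
            ≤ coef G (ml γ) σ₂ w s (fun t => wIter G γ U n t) := step1
          _ = ∑ b, σ₂ w s b * innerW G γ (wIter G γ U n) s b := hrw
          _ ≤ _ := step2
          _ = _ := step3

lemma wIter_uniform_approx {η : ℝ} (hη : 0 < η) :
    ∃ n, ∀ t, wIter G γ U n t ≤ wlim G γ U t + η := by
  have hex : ∀ t : S, ∃ n, wIter G γ U n t < wlim G γ U t + η := by
    intro t
    have hlt : (⨅ n, wIter G γ U n t) < wlim G γ U t + η := by
      have h0 : wlim G γ U t < wlim G γ U t + η := lt_add_of_pos_right _ hη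
      exact h0
    exact exists_lt_of_ciInf_lt hlt
  choose nf hnf using hex
  refine ⟨Finset.univ.sup nf, fun t => ?_⟩
  exact le_trans (wIter_antitone hG hγ (Finset.le_sup (Finset.mem_univ t)) t)
    (le_of_lt (hnf t))

lemma wlim_fix {s : S} (hs : s ∉ U) :
    ∃ b ∈ G.Γ₂ s, wlim G γ U s ≤ innerW G γ (wlim G γ U) s b := by
  have hsup : wlim G γ U s ≤ (G.Γ₂ s).sup' (hG.2.1 s) (innerW G γ (wlim G γ U) s) := by
    have key : ∀ η : ℝ, 0 < η →
        wlim G γ U s ≤ (G.Γ₂ s).sup' (hG.2.1 s) (innerW G γ (wlim G γ U) s) + η := by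
      intro η hη
      obtain ⟨n, hn⟩ := wIter_uniform_approx (U := U) hG hγ hη
      have h1 : wlim G γ U s ≤ wIter G γ U (n + 1) s := wlim_le hG hγ (n + 1) s
      rw [wIter_succ, if_neg hs, dif_pos (hG.2.1 s)] at h1
      refine le_trans h1 (Finset.sup'_le _ _ fun b hb => ?_)
      calc innerW G γ (wIter G γ U n) s b
          ≤ innerW G γ (fun t => wlim G γ U t + η) s b := innerW_mono hG hγ hn s b
        _ = innerW G γ (wlim G γ U) s b + η := innerW_add_const hG hγ _ η s b
        _ ≤ _ + η := by
            exact add_le_add_left (Finset.le_sup' _ hb) η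
    by_contra hcon
    push_neg at hcon
    have := key ((wlim G γ U s - (G.Γ₂ s).sup' (hG.2.1 s) (innerW G γ (wlim G γ U) s)) / 2)
      (by linarith)
    linarith
  obtain ⟨b, hb, heq⟩ := Finset.exists_mem_eq_sup' (hG.2.1 s) (innerW G γ (wlim G γ U) s)
  exact ⟨b, hb, heq ▸ hsup⟩

lemma wlim_eq_zero
    (hproper : ∀ σ₂, IsStrat2 G σ₂ → ∀ s, prReach G (ml γ) σ₂ U s = 1) :
    ∀ s, wlim G γ U s = 0 := by
  have hstrat1 : IsStrat1 G (ml γ) := fun w s => hγ s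
  have hbs : ∀ s : S, ∃ b, b ∈ G.Γ₂ s ∧
      (s ∉ U → wlim G γ U s ≤ innerW G γ (wlim G γ U) s b) := by
    intro s
    by_cases hs : s ∈ U
    · obtain ⟨b, hb⟩ := hG.2.1 s
      exact ⟨b, hb, fun h => absurd hs h⟩
    · obtain ⟨b, hb, hle⟩ := wlim_fix hG hγ hs
      exact ⟨b, hb, fun _ => hle⟩
  choose bs hbs1 hbs2 using hbs
  set σstar : List S → S → M → ℝ := ml (fun s => pureDist (bs s)) with hσstar
  have hstr : IsStrat2 G σstar := by
    intro w s
    show IsDistOn (G.Γ₂ s) (pureDist (bs s))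
    exact isDistOn_pureDist G (hbs1 s)
  have claim : ∀ n (w : List S) (s : S),
      wlim G γ U s ≤ safeW G (ml γ) σstar Uᶜ n w s := by
    intro n
    induction n with
    | zero =>
        intro w s
        rw [safeW_zero]
        by_cases hs : s ∈ U
        · have := wlim_le (U := U) hG hγ 0 s
          rw [wIter_zero, if_pos hs] at this
          simpa [hs] using this
        · have := wlim_le (U := U) hG hγ 0 s
          rw [wIter_zero, if_neg hs] at this
          simpa [hs] using this
    | succ n ih =>
        intro w s
        rw [safeW_succ]
        by_cases hs : s ∈ U
        · rw [if_neg (by simpa using hs)]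
          have := wlim_le (U := U) hG hγ 0 s
          rw [wIter_zero, if_pos hs] at this
          exact this
        · rw [if_pos (Set.mem_compl hs)]
          have h1 : coef G (ml γ) σstar w s (fun t => wlim G γ U t)
              = innerW G γ (wlim G γ U) s (bs s) := by
            unfold coef innerW ml
            refine Finset.sum_congr rfl fun a _ => ?_
            rw [Finset.sum_eq_single (bs s)]
            · refine Finset.sum_congr rfl fun t _ => ?_
              show γ s a * pureDist (bs s) (bs s) * G.δ s a (bs s) t * wlim G γ U t = _
              unfold pureDist
              rw [if_pos rfl]; ring
            · intro b _ hb
              refine Finset.sum_eq_zero fun t _ => ?_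
              show γ s a * pureDist (bs s) b * G.δ s a b t * wlim G γ U t = 0
              unfold pureDist
              rw [if_neg hb]; ring
            · intro h; exact absurd (Finset.mem_univ (bs s)) h
          calc wlim G γ U s ≤ innerW G γ (wlim G γ U) s (bs s) := hbs2 s hs
            _ = coef G (ml γ) σstar w s (fun t => wlim G γ U t) := h1.symm
            _ ≤ coef G (ml γ) σstar w s
                (fun t => safeW G (ml γ) σstar Uᶜ n (w ++ [s]) t) :=
              coef_mono hG (hstrat1 w s).1 (hstr w s).1 fun t => ih (w ++ [s]) t
  intro s
  have hsmall : ∀ η : ℝ, 0 < η → wlim G γ U s ≤ η := by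
    intro η hη
    obtain ⟨n, hn⟩ := exists_safeW_small hG hstrat1 hstr U s (hproper σstar hstr s) hη
    exact le_trans (claim n [] s) hn
  refine le_antisymm ?_ (wlim_nonneg hG hγ s)
  by_contra hcon
  push_neg at hcon
  have := hsmall (wlim G γ U s / 2) (by linarith)
  linarith

lemma exists_uniform_N
    (hproper : ∀ σ₂, IsStrat2 G σ₂ → ∀ s, prReach G (ml γ) σ₂ U s = 1) :
    ∃ N, ∀ σ₂, IsStrat2 G σ₂ → ∀ (w : List S) (s : S),
      safeW G (ml γ) σ₂ Uᶜ N w s ≤ 1 / 2 := by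
  have hwl := wlim_eq_zero hG hγ hproper
  have hex : ∀ s : S, ∃ n, wIter G γ U n s < 1 / 2 := by
    intro s
    have hlt : (⨅ n, wIter G γ U n s) < 1 / 2 := by
      have : wlim G γ U s < 1 / 2 := by rw [hwl s]; norm_num
      exact this
    exact exists_lt_of_ciInf_lt hlt
  choose nf hnf using hex
  refine ⟨Finset.univ.sup nf, fun σ₂ hσ₂ w s => ?_⟩
  refine le_trans (safeW_le_wIter hG hγ hσ₂ _ w s) ?_
  exact le_trans (wIter_antitone hG hγ (Finset.le_sup (Finset.mem_univ s)) s)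
    (le_of_lt (hnf s))

end WIter

end CGame
namespace CGame

variable {S M : Type} [Fintype S] [DecidableEq S] [Fintype M] [DecidableEq M]

section Main

variable {G : CGame S M} {σ₁ σ₂ : List S → S → M → ℝ}

lemma coef_sum {ι : Type*} (r : Finset ι) (f : ι → S → ℝ) (w : List S) (s : S) :
    coef G σ₁ σ₂ w s (fun t => ∑ i ∈ r, f i t) = ∑ i ∈ r, coef G σ₁ σ₂ w s (f i) := by
  classical
  induction r using Finset.cons_induction with
  | empty => simpa using coef_zero
  | cons a r ha ih =>
      simp only [Finset.sum_cons]
      rw [coef_add (fun t => f a t) (fun t => ∑ i ∈ r, f i t), ih]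

lemma recF_succ {F : Set S} (n : ℕ) (f : List S → S → ℝ) (w : List S) (s : S) :
    recF G σ₁ σ₂ F (n + 1) f w s
      = if s ∈ F then coef G σ₁ σ₂ w s (fun t => recF G σ₁ σ₂ F n f (w ++ [s]) t)
        else 0 := rfl

variable (hG : G.IsGame) (h1 : IsStrat1 G σ₁) (h2 : IsStrat2 G σ₂)
include hG h1 h2

/-- Exponential decay of safety probabilities from a uniform `N`-step bound. -/
lemma safeW_pow {F : Set S} (N : ℕ)
    (hN : ∀ (w : List S) (s : S), safeW G σ₁ σ₂ F N w s ≤ 1 / 2) :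
    ∀ j (w : List S) (s : S), safeW G σ₁ σ₂ F ((N + 1) * j) w s ≤ (1 / 2) ^ j := by
  intro j
  induction j with
  | zero =>
      intro w s
      rw [Nat.mul_zero, pow_zero]
      exact safeW_le_one hG h1 h2 0 w s
  | succ j ih =>
      intro w s
      have harith : (N + 1) * (j + 1) = (N + 1) * j + (1 + N) := by ring
      rw [harith, safeW_add]
      have hinner : ∀ (w' : List S) (t : S),
          safeW G σ₁ σ₂ F (1 + N) w' t ≤ (1 / 2) * safeW G σ₁ σ₂ F 0 w' t := by
        intro w' t
        rw [show 1 + N = N + 1 by ring, safeW_succ, safeW_zero]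
        by_cases ht : t ∈ F
        · rw [if_pos ht, if_pos ht, mul_one]
          calc coef G σ₁ σ₂ w' t (fun u => safeW G σ₁ σ₂ F N (w' ++ [t]) u)
              ≤ coef G σ₁ σ₂ w' t (fun _ => 1 / 2) :=
                coef_mono hG (h1 w' t).1 (h2 w' t).1 fun u => hN (w' ++ [t]) u
            _ = 1 / 2 := coef_const hG (h1 w' t) (h2 w' t) _
        · rw [if_neg ht, if_neg ht, mul_zero]
      have hrec : recF G σ₁ σ₂ F ((N + 1) * j)
            (fun w' t => safeW G σ₁ σ₂ F (1 + N) w' t) w s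
          ≤ (1 / 2) * safeW G σ₁ σ₂ F ((N + 1) * j) w s := by
        calc recF G σ₁ σ₂ F ((N + 1) * j) (fun w' t => safeW G σ₁ σ₂ F (1 + N) w' t) w s
            ≤ recF G σ₁ σ₂ F ((N + 1) * j)
                (fun w' t => (1 / 2) * safeW G σ₁ σ₂ F 0 w' t) w s :=
              recF_mono hG h1 h2 hinner _ w s
          _ = (1 / 2) * recF G σ₁ σ₂ F ((N + 1) * j)
                (fun w' t => safeW G σ₁ σ₂ F 0 w' t) w s :=
              recF_smul (1 / 2) _ _ w s
          _ = (1 / 2) * safeW G σ₁ σ₂ F ((N + 1) * j) w s := by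
              have h0 := safeW_add (G := G) (σ₁ := σ₁) (σ₂ := σ₂) (F := F)
                ((N + 1) * j) 0 w s
              rw [Nat.add_zero] at h0
              rw [← h0]
      have hih := ih w s
      calc recF G σ₁ σ₂ F ((N + 1) * j) (fun w' t => safeW G σ₁ σ₂ F (1 + N) w' t) w s
          ≤ (1 / 2) * safeW G σ₁ σ₂ F ((N + 1) * j) w s := hrec
        _ ≤ (1 / 2) * (1 / 2) ^ j := by linarith
        _ = (1 / 2) ^ (j + 1) := by ring

end Main

section Psi

variable {G : CGame S M}

/-- Probability of being in `I` at time `n` while avoiding `U` throughout. -/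
noncomputable def psiF (G : CGame S M) (σ₁ σ₂ : List S → S → M → ℝ) (U I : Set S)
    (n : ℕ) : List S → S → ℝ :=
  recF G σ₁ σ₂ Uᶜ n (fun _ t => if t ∈ I then 1 else 0)

/-- Expected "remaining distance" `1 - v` at time `n`, truncated at `U`. -/
noncomputable def chiF (G : CGame S M) (σ₁ σ₂ : List S → S → M → ℝ) (U : Set S)
    (v : S → ℝ) (n : ℕ) : List S → S → ℝ :=
  recF G σ₁ σ₂ Uᶜ n (fun _ t => 1 - v t)

variable {σ₁ σ₂ : List S → S → M → ℝ} {U I : Set S} {v : S → ℝ}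

lemma psiF_zero (w : List S) (s : S) :
    psiF G σ₁ σ₂ U I 0 w s = if s ∈ I then 1 else 0 := rfl

lemma psiF_succ_pos {s : S} (hs : s ∉ U) (n : ℕ) (w : List S) :
    psiF G σ₁ σ₂ U I (n + 1) w s
      = coef G σ₁ σ₂ w s (fun t => psiF G σ₁ σ₂ U I n (w ++ [s]) t) := by
  show recF G σ₁ σ₂ Uᶜ (n + 1) _ w s = _
  rw [recF_succ, if_pos (Set.mem_compl hs)]
  rfl

lemma psiF_succ_neg {s : S} (hs : s ∈ U) (n : ℕ) (w : List S) :
    psiF G σ₁ σ₂ U I (n + 1) w s = 0 := by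
  show recF G σ₁ σ₂ Uᶜ (n + 1) _ w s = _
  rw [recF_succ, if_neg (by simpa using hs)]

lemma chiF_zero (w : List S) (s : S) : chiF G σ₁ σ₂ U v 0 w s = 1 - v s := rfl

lemma chiF_succ_pos {s : S} (hs : s ∉ U) (n : ℕ) (w : List S) :
    chiF G σ₁ σ₂ U v (n + 1) w s
      = coef G σ₁ σ₂ w s (fun t => chiF G σ₁ σ₂ U v n (w ++ [s]) t) := by
  show recF G σ₁ σ₂ Uᶜ (n + 1) _ w s = _
  rw [recF_succ, if_pos (Set.mem_compl hs)]
  rfl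

lemma chiF_succ_neg {s : S} (hs : s ∈ U) (n : ℕ) (w : List S) :
    chiF G σ₁ σ₂ U v (n + 1) w s = 0 := by
  show recF G σ₁ σ₂ Uᶜ (n + 1) _ w s = _
  rw [recF_succ, if_neg (by simpa using hs)]

variable (hG : G.IsGame) (h1 : IsStrat1 G σ₁) (h2 : IsStrat2 G σ₂)
include hG h1 h2

lemma psiF_nonneg : ∀ n (w : List S) (s : S), 0 ≤ psiF G σ₁ σ₂ U I n w s := by
  intro n w s
  refine recF_nonneg hG h1 h2 (fun w' t => ?_) n w s
  split <;> norm_num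

lemma chiF_nonneg (hv1 : ∀ t, v t ≤ 1) :
    ∀ n (w : List S) (s : S), 0 ≤ chiF G σ₁ σ₂ U v n w s := by
  intro n w s
  refine recF_nonneg hG h1 h2 (fun w' t => ?_) n w s
  have := hv1 t; linarith

lemma chiF_dec (hIU : ∀ s ∈ I, s ∉ U) (hv1 : ∀ t, v t ≤ 1) {ε : ℝ}
    (hkey : ∀ (w : List S) (s : S), s ∉ U →
      v s + (if s ∈ I then ε else 0) ≤ coef G σ₁ σ₂ w s v) :
    ∀ n (w : List S) (s : S),
      chiF G σ₁ σ₂ U v (n + 1) w s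
        ≤ chiF G σ₁ σ₂ U v n w s - ε * psiF G σ₁ σ₂ U I n w s := by
  intro n
  induction n with
  | zero =>
      intro w s
      by_cases hs : s ∈ U
      · rw [chiF_succ_neg hs, chiF_zero, psiF_zero, if_neg (fun h => hIU s h hs)]
        have := hv1 s
        linarith
      · rw [chiF_succ_pos hs, chiF_zero, psiF_zero]
        have hcv : coef G σ₁ σ₂ w s (fun t => chiF G σ₁ σ₂ U v 0 (w ++ [s]) t)
            = 1 - coef G σ₁ σ₂ w s v := by
          rw [show (fun t => chiF G σ₁ σ₂ U v 0 (w ++ [s]) t)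
                = (fun t => (fun _ : S => (1:ℝ)) t - v t) from rfl]
          rw [coef_sub (fun _ => (1:ℝ)) v, coef_const hG (h1 w s) (h2 w s) 1]
        rw [hcv]
        have h2' := hkey w s hs
        by_cases hsI : s ∈ I <;> simp only [hsI, if_true, if_false] at h2' ⊢ <;> linarith
  | succ n ihn =>
      intro w s
      by_cases hs : s ∈ U
      · rw [chiF_succ_neg hs, chiF_succ_neg hs, psiF_succ_neg hs]
        norm_num
      · rw [chiF_succ_pos hs, chiF_succ_pos hs, psiF_succ_pos hs]
        calc coef G σ₁ σ₂ w s (fun t => chiF G σ₁ σ₂ U v (n + 1) (w ++ [s]) t)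
            ≤ coef G σ₁ σ₂ w s (fun t => chiF G σ₁ σ₂ U v n (w ++ [s]) t
                - ε * psiF G σ₁ σ₂ U I n (w ++ [s]) t) :=
              coef_mono hG (h1 w s).1 (h2 w s).1 fun t => ihn (w ++ [s]) t
          _ = coef G σ₁ σ₂ w s (fun t => chiF G σ₁ σ₂ U v n (w ++ [s]) t)
              - ε * coef G σ₁ σ₂ w s (fun t => psiF G σ₁ σ₂ U I n (w ++ [s]) t) := by
              rw [coef_sub, coef_smul]
          _ ≤ _ := le_refl _

/-- The inequality `safeW ≤ safeW(U∪I) + ∑ ψ`, base case. -/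
lemma safeW_le_base (hIU : ∀ s ∈ I, s ∉ U) :
    ∀ (L : ℕ) (w : List S) (s : S),
      safeW G σ₁ σ₂ Uᶜ L w s
        ≤ safeW G σ₁ σ₂ (U ∪ I)ᶜ L w s
          + ∑ i ∈ Finset.range (L + 1), psiF G σ₁ σ₂ U I i w s := by
  intro L
  induction L with
  | zero =>
      intro w s
      rw [safeW_zero, safeW_zero]
      rw [Finset.sum_range_one, psiF_zero]
      by_cases hs : s ∈ U
      · rw [if_neg (by simpa using hs), if_neg (fun h => hIU s h hs),
          if_neg (by simp [hs])]
        norm_num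
      · rw [if_pos (Set.mem_compl hs)]
        by_cases hsI : s ∈ I
        · rw [if_pos hsI, if_neg (by simp [hsI])]
          norm_num
        · rw [if_neg hsI, if_pos (by simp [hs, hsI])]
          norm_num
  | succ L ihL =>
      intro w s
      by_cases hs : s ∈ U
      · rw [safeW_succ, if_neg (by simpa using hs)]
        have hrhs1 := safeW_nonneg hG h1 h2 (F := (U ∪ I)ᶜ) (L + 1) w s
        have hrhs2 : 0 ≤ ∑ i ∈ Finset.range (L + 2), psiF G σ₁ σ₂ U I i w s :=
          Finset.sum_nonneg fun i _ => psiF_nonneg hG h1 h2 i w s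
        linarith
      · by_cases hsI : s ∈ I
        · have hlhs := safeW_le_one hG h1 h2 (F := Uᶜ) (L + 1) w s
          have hrhs1 := safeW_nonneg hG h1 h2 (F := (U ∪ I)ᶜ) (L + 1) w s
          have hone : (1 : ℝ) ≤ ∑ i ∈ Finset.range (L + 2), psiF G σ₁ σ₂ U I i w s := by
            have hmem : (0 : ℕ) ∈ Finset.range (L + 2) := by simp
            have h0 : psiF G σ₁ σ₂ U I 0 w s = 1 := by rw [psiF_zero, if_pos hsI]
            calc (1 : ℝ) = psiF G σ₁ σ₂ U I 0 w s := h0.symm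
              _ ≤ _ := Finset.single_le_sum
                  (fun i _ => psiF_nonneg hG h1 h2 i w s) hmem
          linarith
        · have hsUI : s ∉ U ∪ I := by simp [hs, hsI]
          rw [safeW_succ, if_pos (Set.mem_compl hs), safeW_succ, if_pos (Set.mem_compl hsUI)]
          have hcoef : coef G σ₁ σ₂ w s (fun t => safeW G σ₁ σ₂ Uᶜ L (w ++ [s]) t)
              ≤ coef G σ₁ σ₂ w s (fun t => safeW G σ₁ σ₂ (U ∪ I)ᶜ L (w ++ [s]) t
                + ∑ i ∈ Finset.range (L + 1), psiF G σ₁ σ₂ U I i (w ++ [s]) t) :=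
            coef_mono hG (h1 w s).1 (h2 w s).1 fun t => ihL (w ++ [s]) t
          have hsplit : coef G σ₁ σ₂ w s (fun t => safeW G σ₁ σ₂ (U ∪ I)ᶜ L (w ++ [s]) t
                + ∑ i ∈ Finset.range (L + 1), psiF G σ₁ σ₂ U I i (w ++ [s]) t)
              = coef G σ₁ σ₂ w s (fun t => safeW G σ₁ σ₂ (U ∪ I)ᶜ L (w ++ [s]) t)
                + ∑ i ∈ Finset.range (L + 1),
                    coef G σ₁ σ₂ w s (fun t => psiF G σ₁ σ₂ U I i (w ++ [s]) t) := by
            rw [coef_add, coef_sum]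
          have hpsi : ∀ i, coef G σ₁ σ₂ w s (fun t => psiF G σ₁ σ₂ U I i (w ++ [s]) t)
              = psiF G σ₁ σ₂ U I (i + 1) w s := fun i => (psiF_succ_pos hs i w).symm
          have hreindex : (∑ i ∈ Finset.range (L + 1), psiF G σ₁ σ₂ U I (i + 1) w s)
              + psiF G σ₁ σ₂ U I 0 w s
              = ∑ i ∈ Finset.range (L + 2), psiF G σ₁ σ₂ U I i w s := by
            rw [Finset.sum_range_succ' (fun i => psiF G σ₁ σ₂ U I i w s) (L + 1)]
          have hψ0 : 0 ≤ psiF G σ₁ σ₂ U I 0 w s := psiF_nonneg hG h1 h2 0 w s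
          calc coef G σ₁ σ₂ w s (fun t => safeW G σ₁ σ₂ Uᶜ L (w ++ [s]) t)
              ≤ coef G σ₁ σ₂ w s (fun t => safeW G σ₁ σ₂ (U ∪ I)ᶜ L (w ++ [s]) t)
                + ∑ i ∈ Finset.range (L + 1),
                    coef G σ₁ σ₂ w s (fun t => psiF G σ₁ σ₂ U I i (w ++ [s]) t) := by
                rw [← hsplit]; exact hcoef
            _ = coef G σ₁ σ₂ w s (fun t => safeW G σ₁ σ₂ (U ∪ I)ᶜ L (w ++ [s]) t)
                + ∑ i ∈ Finset.range (L + 1), psiF G σ₁ σ₂ U I (i + 1) w s := by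
                rw [Finset.sum_congr rfl fun i _ => hpsi i]
            _ ≤ coef G σ₁ σ₂ w s (fun t => safeW G σ₁ σ₂ (U ∪ I)ᶜ L (w ++ [s]) t)
                + ∑ i ∈ Finset.range (L + 2), psiF G σ₁ σ₂ U I i w s := by
                rw [← hreindex]; linarith

/-- The inequality `safeW (m+L) ≤ recF m (safeW(U∪I) L) + ∑_{i≤L} ψ (m+i)`. -/
lemma safeW_le_split (hIU : ∀ s ∈ I, s ∉ U) :
    ∀ (m L : ℕ) (w : List S) (s : S),
      safeW G σ₁ σ₂ Uᶜ (m + L) w s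
        ≤ recF G σ₁ σ₂ Uᶜ m (fun w' t => safeW G σ₁ σ₂ (U ∪ I)ᶜ L w' t) w s
          + ∑ i ∈ Finset.range (L + 1), psiF G σ₁ σ₂ U I (m + i) w s := by
  intro m
  induction m with
  | zero =>
      intro L w s
      have := safeW_le_base hG h1 h2 hIU L w s
      simpa [recF] using this
  | succ m ihm =>
      intro L w s
      rw [show m + 1 + L = (m + L) + 1 by omega, safeW_succ, recF_succ]
      by_cases hs : s ∈ U
      · rw [if_neg (by simpa using hs), if_neg (by simpa using hs)]
        have hr : 0 ≤ ∑ i ∈ Finset.range (L + 1), psiF G σ₁ σ₂ U I (m + 1 + i) w s :=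
          Finset.sum_nonneg fun i _ => psiF_nonneg hG h1 h2 _ w s
        linarith
      · rw [if_pos (Set.mem_compl hs), if_pos (Set.mem_compl hs)]
        have hcoef : coef G σ₁ σ₂ w s (fun t => safeW G σ₁ σ₂ Uᶜ (m + L) (w ++ [s]) t)
            ≤ coef G σ₁ σ₂ w s (fun t =>
                recF G σ₁ σ₂ Uᶜ m (fun w' t' => safeW G σ₁ σ₂ (U ∪ I)ᶜ L w' t') (w ++ [s]) t
                + ∑ i ∈ Finset.range (L + 1), psiF G σ₁ σ₂ U I (m + i) (w ++ [s]) t) :=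
          coef_mono hG (h1 w s).1 (h2 w s).1 fun t => ihm L (w ++ [s]) t
        have hsplit : coef G σ₁ σ₂ w s (fun t =>
              recF G σ₁ σ₂ Uᶜ m (fun w' t' => safeW G σ₁ σ₂ (U ∪ I)ᶜ L w' t') (w ++ [s]) t
              + ∑ i ∈ Finset.range (L + 1), psiF G σ₁ σ₂ U I (m + i) (w ++ [s]) t)
            = coef G σ₁ σ₂ w s (fun t =>
                recF G σ₁ σ₂ Uᶜ m (fun w' t' => safeW G σ₁ σ₂ (U ∪ I)ᶜ L w' t') (w ++ [s]) t)
              + ∑ i ∈ Finset.range (L + 1),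
                  coef G σ₁ σ₂ w s (fun t => psiF G σ₁ σ₂ U I (m + i) (w ++ [s]) t) := by
          rw [coef_add, coef_sum]
        have hpsi : ∀ i, coef G σ₁ σ₂ w s (fun t => psiF G σ₁ σ₂ U I (m + i) (w ++ [s]) t)
            = psiF G σ₁ σ₂ U I (m + 1 + i) w s := by
          intro i
          rw [show m + 1 + i = (m + i) + 1 by omega]
          exact (psiF_succ_pos hs (m + i) w).symm
        calc coef G σ₁ σ₂ w s (fun t => safeW G σ₁ σ₂ Uᶜ (m + L) (w ++ [s]) t)
            ≤ _ := hcoef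
          _ = _ + ∑ i ∈ Finset.range (L + 1),
                  coef G σ₁ σ₂ w s (fun t => psiF G σ₁ σ₂ U I (m + i) (w ++ [s]) t) := hsplit
          _ = _ + ∑ i ∈ Finset.range (L + 1), psiF G σ₁ σ₂ U I (m + 1 + i) w s := by
              rw [Finset.sum_congr rfl fun i _ => hpsi i]

end Psi

end CGame
namespace CGame

variable {S M : Type} [Fintype S] [DecidableEq S] [Fintype M] [DecidableEq M]
variable {G : CGame S M}

/-- Outside `I` the improved selector plays like `γ`, so staying outside `U ∪ I`
under `γ'` is no more likely than staying outside `U` under `γ`. -/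
lemma safeW_union_le (hG : G.IsGame) {γ γ' : S → M → ℝ}
    (hγ : IsSel1 G γ) (hγ' : IsSel1 G γ')
    {σ₂ : List S → S → M → ℝ} (hσ₂ : IsStrat2 G σ₂) {U I : Set S}
    (hagree : ∀ s ∉ I, γ' s = γ s) :
    ∀ n (w : List S) (s : S),
      safeW G (ml γ') σ₂ (U ∪ I)ᶜ n w s ≤ safeW G (ml γ) σ₂ Uᶜ n w s := by
  have h1' : IsStrat1 G (ml γ') := fun w s => hγ' s
  have h1 : IsStrat1 G (ml γ) := fun w s => hγ s
  intro n
  induction n with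
  | zero =>
      intro w s
      rw [safeW_zero, safeW_zero]
      by_cases hs : s ∈ U ∪ I
      · rw [if_neg (by simp only [Set.mem_compl_iff, not_not]; exact hs)]
        split <;> norm_num
      · rw [if_pos (Set.mem_compl hs), if_pos (Set.mem_compl fun h => hs (Or.inl h))]
  | succ n ih =>
      intro w s
      by_cases hs : s ∈ U ∪ I
      · rw [safeW_succ, if_neg (by simp only [Set.mem_compl_iff, not_not]; exact hs)]
        exact safeW_nonneg hG h1 hσ₂ (n + 1) w s
      · have hsU : s ∉ U := fun h => hs (Or.inl h)
        have hsI : s ∉ I := fun h => hs (Or.inr h)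
        rw [safeW_succ, safeW_succ, if_pos (Set.mem_compl hs), if_pos (Set.mem_compl hsU)]
        have heq : coef G (ml γ') σ₂ w s
              (fun t => safeW G (ml γ') σ₂ (U ∪ I)ᶜ n (w ++ [s]) t)
            = coef G (ml γ) σ₂ w s
              (fun t => safeW G (ml γ') σ₂ (U ∪ I)ᶜ n (w ++ [s]) t) :=
          coef_eq_of_eq (show (ml γ') w s = (ml γ) w s from hagree s hsI) _
        rw [heq]
        exact coef_mono hG (h1 w s).1 (hσ₂ w s).1 fun t => ih (w ++ [s]) t

/-- Main quantitative lemma: under the improved selector the probability of avoiding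
`U` for a long time is arbitrarily small. -/
lemma main_small (hG : G.IsGame) {γ γ' : S → M → ℝ}
    (hγ : IsSel1 G γ) (hγ' : IsSel1 G γ') {U I : Set S}
    (hIU : ∀ s ∈ I, s ∉ U) (hagree : ∀ s ∉ I, γ' s = γ s)
    {v : S → ℝ} (hv0 : ∀ s, 0 ≤ v s) (hv1 : ∀ s, v s ≤ 1)
    {ε : ℝ} (hε : 0 < ε)
    (hkey : ∀ (s : S) (y : M → ℝ), IsDistOn (G.Γ₂ s) y →
      v s + (if s ∈ I then ε else 0) ≤ preSS G v s (γ' s) y)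
    (N : ℕ)
    (hN : ∀ σ₂', IsStrat2 G σ₂' → ∀ (w : List S) (s : S),
      safeW G (ml γ) σ₂' Uᶜ N w s ≤ 1 / 2)
    {σ₂ : List S → S → M → ℝ} (hσ₂ : IsStrat2 G σ₂) (s₀ : S)
    {η : ℝ} (hη : 0 < η) :
    ∃ n, safeW G (ml γ') σ₂ Uᶜ n [] s₀ ≤ η := by
  have h1' : IsStrat1 G (ml γ') := fun w s => hγ' s
  have h1 : IsStrat1 G (ml γ) := fun w s => hγ s
  have hkeyc : ∀ (w : List S) (s : S), s ∉ U →
      v s + (if s ∈ I then ε else 0) ≤ coef G (ml γ') σ₂ w s v := by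
    intro w s _
    rw [coef_eq_preSS]
    exact hkey s (σ₂ w s) (hσ₂ w s)
  have hdec := chiF_dec hG h1' hσ₂ hIU hv1 hkeyc
  have htel : ∀ K, chiF G (ml γ') σ₂ U v K [] s₀
      + ε * (∑ n ∈ Finset.range K, psiF G (ml γ') σ₂ U I n [] s₀)
      ≤ chiF G (ml γ') σ₂ U v 0 [] s₀ := by
    intro K
    induction K with
    | zero => simp
    | succ K ih =>
        rw [Finset.sum_range_succ, mul_add]
        have := hdec K [] s₀
        linarith
  have hpart : ∀ K, (∑ n ∈ Finset.range K, psiF G (ml γ') σ₂ U I n [] s₀) ≤ 1 / ε := by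
    intro K
    have h := htel K
    have hχK := chiF_nonneg (U := U) hG h1' hσ₂ hv1 K [] s₀
    have hχ0 : chiF G (ml γ') σ₂ U v 0 [] s₀ = 1 - v s₀ := chiF_zero [] s₀
    rw [le_div_iff₀ hε, mul_comm]
    rw [hχ0] at h
    have := hv0 s₀
    linarith
  have hbddA : BddAbove (Set.range fun K : ℕ =>
      ∑ n ∈ Finset.range K, psiF G (ml γ') σ₂ U I n [] s₀) :=
    ⟨1 / ε, by rintro r ⟨K, rfl⟩; exact hpart K⟩
  set A := ⨆ K : ℕ, (∑ n ∈ Finset.range K, psiF G (ml γ') σ₂ U I n [] s₀) with hA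
  have hAub : ∀ K, (∑ n ∈ Finset.range K, psiF G (ml γ') σ₂ U I n [] s₀) ≤ A :=
    fun K => le_ciSup hbddA K
  obtain ⟨m, hm⟩ : ∃ m, A - η / 2
      < ∑ n ∈ Finset.range m, psiF G (ml γ') σ₂ U I n [] s₀ := by
    have hlt : A - η / 2 < A := by linarith
    obtain ⟨K, hK⟩ := exists_lt_of_lt_ciSup hlt
    exact ⟨K, hK⟩
  obtain ⟨j, hj⟩ : ∃ j : ℕ, ((1 : ℝ) / 2) ^ j < η / 2 :=
    exists_pow_lt_of_lt_one (by linarith) (by norm_num)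
  refine ⟨m + (N + 1) * j, ?_⟩
  have hsplit := safeW_le_split hG h1' hσ₂ hIU m ((N + 1) * j) [] s₀
  have hd : ∀ (w' : List S) (t : S),
      safeW G (ml γ') σ₂ (U ∪ I)ᶜ ((N + 1) * j) w' t ≤ η / 2 := by
    intro w' t
    calc safeW G (ml γ') σ₂ (U ∪ I)ᶜ ((N + 1) * j) w' t
        ≤ safeW G (ml γ) σ₂ Uᶜ ((N + 1) * j) w' t :=
          safeW_union_le hG hγ hγ' hσ₂ hagree _ w' t
      _ ≤ (1 / 2) ^ j := safeW_pow hG h1 hσ₂ N (hN σ₂ hσ₂) j w' t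
      _ ≤ η / 2 := le_of_lt hj
  have hrec : recF G (ml γ') σ₂ Uᶜ m
      (fun w' t => safeW G (ml γ') σ₂ (U ∪ I)ᶜ ((N + 1) * j) w' t) [] s₀ ≤ η / 2 :=
    recF_le_const hG h1' hσ₂ (by linarith) hd m [] s₀
  have hψpart : (∑ i ∈ Finset.range ((N + 1) * j + 1),
      psiF G (ml γ') σ₂ U I (m + i) [] s₀) ≤ η / 2 := by
    have hre : (∑ i ∈ Finset.range ((N + 1) * j + 1), psiF G (ml γ') σ₂ U I (m + i) [] s₀)
        = ∑ n ∈ Finset.Ico m (m + ((N + 1) * j + 1)), psiF G (ml γ') σ₂ U I n [] s₀ := by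
      rw [Finset.sum_Ico_eq_sum_range]
      simp
    rw [hre, Finset.sum_Ico_eq_sub _ (by omega)]
    have hup := hAub (m + ((N + 1) * j + 1))
    linarith
  linarith

end CGame

/-- **The strategy-improvement step preserves properness (reachability).**
Let `γ` be a proper player-1 selector with value `v = ⟨1⟩val^{ml γ}(Reach T)`, let
`I = {s ∉ T ∪ W₂ | Pre₁(v)(s) > v(s)}`, and let `γ'` agree with `γ` outside `I`
and satisfy `Pre_{1:γ'}(v)(s) = Pre₁(v)(s) > v(s)` on `I`. Then `γ'` is proper. -/
theorem improvement_step_preserves_proper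
    {S M : Type} [Fintype S] [DecidableEq S] [Fintype M] [DecidableEq M]
    (G : CGame S M) (hG : G.IsGame) (T : Set S)
    (habs : ∀ s ∈ T ∪ CGame.W2 G T, CGame.Absorbing G s)
    (γ γ' : S → M → ℝ) (hγ : CGame.IsSel1 G γ) (hγ' : CGame.IsSel1 G γ')
    (hproper : CGame.Proper G T (CGame.ml γ))
    (v : S → ℝ) (hv : v = CGame.valReachUnder G (CGame.ml γ) T)
    (I : Set S)
    (hI : I = {s | s ∉ T ∪ CGame.W2 G T ∧ v s < CGame.pre1 G v s})
    (hagree : ∀ s ∉ I, γ' s = γ s)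
    (himp : ∀ s ∈ I, CGame.pre1Sel G v s (γ' s) = CGame.pre1 G v s) :
    CGame.Proper G T (CGame.ml γ') := by
  open CGame in
  haveI inst : Nonempty {σ // IsStrat2 G σ} :=
    ⟨⟨ml (unif2 G), isStrat2_ml_unif2 G hG⟩⟩
  have h1 : IsStrat1 G (ml γ) := fun w s => hγ s
  have h1' : IsStrat1 G (ml γ') := fun w s => hγ' s
  have hv0 : ∀ t, 0 ≤ v t := by
    intro t; rw [hv]
    exact le_ciInf fun σ₂ => prReach_nonneg hG h1 σ₂.2 T t
  have hv1 : ∀ t, v t ≤ 1 := by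
    intro t; rw [hv]
    have hb : BddBelow (Set.range fun σ₂ : {σ // IsStrat2 G σ} =>
        prReach G (ml γ) σ₂.1 T t) := ⟨0, by
      rintro r ⟨σ₂, rfl⟩
      exact prReach_nonneg hG h1 σ₂.2 T t⟩
    exact le_trans (ciInf_le hb ⟨ml (unif2 G), isStrat2_ml_unif2 G hG⟩)
      (prReach_le_one hG h1 (isStrat2_ml_unif2 G hG) T t)
  have hIU : ∀ s ∈ I, s ∉ T ∪ W2 G T := by
    intro s hs; rw [hI] at hs; exact hs.1
  have hIgap : ∀ s ∈ I, v s < pre1 G v s := by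
    intro s hs; rw [hI] at hs; exact hs.2
  set ε : ℝ := if hne : (Set.toFinset I).Nonempty
    then (Set.toFinset I).inf' hne (fun s => pre1 G v s - v s) else 1 with hεdef
  have hε : 0 < ε := by
    rw [hεdef]
    split
    · rename_i hne
      rw [Finset.lt_inf'_iff]
      intro s hsmem
      have hsI : s ∈ I := Set.mem_toFinset.mp hsmem
      have := hIgap s hsI
      linarith
    · norm_num
  have hεle : ∀ s ∈ I, ε ≤ pre1 G v s - v s := by
    intro s hsI
    rw [hεdef]
    have hne : (Set.toFinset I).Nonempty := ⟨s, Set.mem_toFinset.mpr hsI⟩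
    rw [dif_pos hne]
    exact Finset.inf'_le _ (Set.mem_toFinset.mpr hsI)
  have hkey : ∀ (s : S) (y : M → ℝ), IsDistOn (G.Γ₂ s) y →
      v s + (if s ∈ I then ε else 0) ≤ preSS G v s (γ' s) y := by
    intro s y hy
    by_cases hsI : s ∈ I
    · rw [if_pos hsI]
      have hgap := hεle s hsI
      calc v s + ε ≤ pre1 G v s := by linarith
        _ = pre1Sel G v s (γ' s) := (himp s hsI).symm
        _ ≤ preSS G v s (γ' s) y := pre1Sel_le hG hv0 (hγ' s).1 hy
    · rw [if_neg hsI, add_zero]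
      by_cases hsU : s ∈ T ∪ W2 G T
      · rw [preSS_absorbing hG (habs s hsU) v (hγ' s) hy]
      · rw [hagree s hsI]
        have hsT : s ∉ T := fun h => hsU (Or.inl h)
        have hval := val_le_preSS hG hγ T
          (by intro t; have := hv0 t; rwa [hv] at this) hsT hy
        rw [hv]
        exact hval
  obtain ⟨N, hN⟩ := exists_uniform_N (U := T ∪ W2 G T) hG hγ hproper
  intro σ₂ hσ₂ s₀
  refine prReach_eq_one_of hG h1' hσ₂ (T ∪ W2 G T) s₀ (fun η hη => ?_)
  exact main_small hG hγ hγ' hIU hagree hv0 hv1 hε hkey N hN hσ₂ s₀ hη
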